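/- Let L be a Lie algebra and r ∈ Im(1−τ) ⊂ L ⊗ L. Define Δ_r(x) = x·r (adjoint diagonal action). Then for all x ∈ L, (1 + ξ + ξ²)·(1 ⊗ Δ_r)·Δ_r(x) = x·c(r), where ξ is the cyclic permutation map on L^{⊗3}. -/

import Mathlib

open TensorProduct

variable (F : Type) [Field F] (L : Type) [LieRing L] [LieAlgebra F L]

/-- The Lie bracket of `L` as a bilinear map. -/
noncomputable def bkL : L →ₗ[F] L →ₗ[F] L :=
  LinearMap.mk₂ F (fun x y => ⁅x, y⁆) add_lie smul_lie lie_add lie_smul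

abbrev VL := L ⊗[F] L

/-- The adjoint diagonal action of `L` on `L ⊗ L`: `x · (a ⊗ b) = [x,a] ⊗ b + a ⊗ [x,b]`. -/
noncomputable def adVbL : L →ₗ[F] VL F L →ₗ[F] VL F L :=
  ((LinearMap.rTensorHom L : (L →ₗ[F] L) →ₗ[F] (VL F L →ₗ[F] VL F L)) ∘ₗ bkL F L)
    + ((LinearMap.lTensorHom L : (L →ₗ[F] L) →ₗ[F] (VL F L →ₗ[F] VL F L)) ∘ₗ bkL F L)

/-- The twist map `τ(x ⊗ y) = y ⊗ x`. -/
noncomputable def tauL : VL F L →ₗ[F] VL F L := (TensorProduct.comm F L L).toLinearMap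

/-- The map `1 - τ`. -/
noncomputable def oneMinusTauL : VL F L →ₗ[F] VL F L where
  toFun v := v - tauL F L v
  map_add' x y := by
    simp only [map_add]; exact sub_add_sub_comm x (tauL F L x) y (tauL F L y) ▸ rfl
  map_smul' c x := by simp only [map_smul, RingHom.id_apply, smul_sub]

/-- `Im (1 - τ) ⊂ L ⊗ L`. -/
noncomputable def skewImL : Submodule F (VL F L) := LinearMap.range (oneMinusTauL F L)

abbrev T3L := L ⊗[F] (L ⊗[F] L)

noncomputable instance : Zero (T3L F L) :=
  (inferInstance : AddCommMonoid (T3L F L)).toAddMonoid.toZero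

/-- The bracket as a linear map on `L ⊗ L`. -/
noncomputable def lbL : VL F L →ₗ[F] L := TensorProduct.lift (bkL F L)

/-- The linear map with `(a ⊗ b) ⊗ (a' ⊗ b') ↦ [a,a'] ⊗ b ⊗ b' + a ⊗ [b,a'] ⊗ b' + a ⊗ a' ⊗ [b,b']`,
so that the classical Yang–Baxter expression is `c(r) = cmapL (r ⊗ r)`. -/
noncomputable def cmapL : (VL F L ⊗[F] VL F L) →ₗ[F] T3L F L :=
  ((TensorProduct.map (lbL F L) (LinearMap.id : VL F L →ₗ[F] VL F L)) ∘ₗ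
      (TensorProduct.tensorTensorTensorComm F L L L L).toLinearMap)
  + ((LinearMap.lTensor L
        ((TensorProduct.map (lbL F L) (LinearMap.id : L →ₗ[F] L)) ∘ₗ
          (TensorProduct.assoc F L L L).symm.toLinearMap)) ∘ₗ
      (TensorProduct.assoc F L L (VL F L)).toLinearMap)
  + (((TensorProduct.assoc F L L L).toLinearMap) ∘ₗ
      (TensorProduct.map (LinearMap.id : VL F L →ₗ[F] VL F L) (lbL F L)) ∘ₗ
      (TensorProduct.tensorTensorTensorComm F L L L L).toLinearMap)

/-- The classical Yang–Baxter expression `c(r)`. -/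
noncomputable def cybL (r : VL F L) : T3L F L := cmapL F L (r ⊗ₜ[F] r)

/-- The adjoint diagonal action of `x ∈ L` on `L ⊗ L ⊗ L`. -/
noncomputable def adT3L (x : L) : T3L F L →ₗ[F] T3L F L :=
  LinearMap.rTensor (VL F L) (bkL F L x) + LinearMap.lTensor L (adVbL F L x)

/-- The cyclic map `ξ : x₁ ⊗ x₂ ⊗ x₃ ↦ x₂ ⊗ x₃ ⊗ x₁`. -/
noncomputable def xiL : T3L F L →ₗ[F] T3L F L :=
  (TensorProduct.assoc F L L L).toLinearMap ∘ₗ (TensorProduct.comm F L (VL F L)).toLinearMap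

/-- `1 + ξ + ξ²` applied to an element of `L ⊗ L ⊗ L`. -/
noncomputable def cyclicSumL (t : T3L F L) : T3L F L := t + xiL F L t + xiL F L (xiL F L t)

/-- The coboundary `Δ_r : x ↦ x · r`. -/
noncomputable def DeltaR (r : VL F L) : L →ₗ[F] VL F L := (adVbL F L).flip r

-- AUX START
section Aux

lemma oneMinusTauL_apply (v : VL F L) : oneMinusTauL F L v = v - tauL F L v := rfl

lemma tauL_tmul (a b : L) : tauL F L (a ⊗ₜ[F] b) = b ⊗ₜ[F] a := rfl

lemma adVbL_tmul (x a b : L) :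
    adVbL F L x (a ⊗ₜ[F] b) = ⁅x, a⁆ ⊗ₜ[F] b + a ⊗ₜ[F] ⁅x, b⁆ := by
  simp [adVbL, bkL]

lemma DeltaR_apply (r : VL F L) (x : L) : DeltaR F L r x = adVbL F L x r := rfl

lemma DeltaR_add (r r' : VL F L) : DeltaR F L (r + r') = DeltaR F L r + DeltaR F L r' :=
  map_add ((adVbL F L).flip) r r'

lemma DeltaR_smul (c : F) (r : VL F L) : DeltaR F L (c • r) = c • DeltaR F L r :=
  map_smul ((adVbL F L).flip) c r

lemma cyclicSumL_add (t t' : T3L F L) :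
    cyclicSumL F L (t + t') = cyclicSumL F L t + cyclicSumL F L t' := by
  simp only [cyclicSumL, map_add]; abel

lemma cyclicSumL_smul (c : F) (t : T3L F L) :
    cyclicSumL F L (c • t) = c • cyclicSumL F L t := by
  simp only [cyclicSumL, map_smul, smul_add]

lemma xiL_tmul (a b c : L) :
    xiL F L (a ⊗ₜ[F] (b ⊗ₜ[F] c)) = b ⊗ₜ[F] (c ⊗ₜ[F] a) := by
  simp [xiL]

lemma adT3L_tmul (x a b c : L) :
    adT3L F L x (a ⊗ₜ[F] (b ⊗ₜ[F] c))
      = ⁅x, a⁆ ⊗ₜ[F] (b ⊗ₜ[F] c) + a ⊗ₜ[F] (⁅x, b⁆ ⊗ₜ[F] c + b ⊗ₜ[F] ⁅x, c⁆) := by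
  simp [adT3L, bkL, adVbL_tmul]

lemma cmapL_tmul (a b c d : L) :
    cmapL F L ((a ⊗ₜ[F] b) ⊗ₜ[F] (c ⊗ₜ[F] d))
      = ⁅a, c⁆ ⊗ₜ[F] (b ⊗ₜ[F] d) + a ⊗ₜ[F] (⁅b, c⁆ ⊗ₜ[F] d) + a ⊗ₜ[F] (c ⊗ₜ[F] ⁅b, d⁆) := by
  simp [cmapL, lbL, bkL]

/-- LHS as a bilinear map in the two copies of `s` (with `r = (1-τ)s`). -/
noncomputable def PhiB (x : L) : VL F L →ₗ[F] VL F L →ₗ[F] T3L F L :=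
  LinearMap.mk₂ F (fun u v => cyclicSumL F L
      (LinearMap.lTensor L (DeltaR F L (oneMinusTauL F L v))
        (DeltaR F L (oneMinusTauL F L u) x)))
    (fun u u' v => by
      simp only [map_add, DeltaR_apply, cyclicSumL_add])
    (fun c u v => by
      simp only [map_smul, DeltaR_apply, cyclicSumL_smul])
    (fun u v v' => by
      simp only [map_add, DeltaR_add, LinearMap.lTensor_add, LinearMap.add_apply,
        cyclicSumL_add])
    (fun c u v => by
      simp only [map_smul, DeltaR_smul, LinearMap.lTensor_smul, LinearMap.smul_apply,
        cyclicSumL_smul])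

/-- RHS as a bilinear map in the two copies of `s`. -/
noncomputable def PsiB (x : L) : VL F L →ₗ[F] VL F L →ₗ[F] T3L F L :=
  LinearMap.mk₂ F (fun u v =>
      adT3L F L x (cmapL F L (oneMinusTauL F L u ⊗ₜ[F] oneMinusTauL F L v)))
    (fun u u' v => by simp only [map_add, add_tmul])
    (fun c u v => by simp only [map_smul, smul_tmul, tmul_smul])
    (fun u v v' => by simp only [map_add, tmul_add])
    (fun c u v => by simp only [map_smul, tmul_smul])

lemma DeltaR_sub (r r' : VL F L) : DeltaR F L (r - r') = DeltaR F L r - DeltaR F L r' :=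
  map_sub ((adVbL F L).flip) r r'

lemma keyDiag (x a b : L) :
    PhiB F L x (a ⊗ₜ[F] b) (a ⊗ₜ[F] b) = PsiB F L x (a ⊗ₜ[F] b) (a ⊗ₜ[F] b) := by
  simp only [PhiB, PsiB, LinearMap.mk₂_apply, oneMinusTauL_apply, tauL_tmul, cyclicSumL,
    DeltaR_sub, DeltaR_apply, map_sub, map_add, LinearMap.sub_apply, LinearMap.lTensor_sub,
    LinearMap.lTensor_tmul, adVbL_tmul, adT3L_tmul, cmapL_tmul, xiL_tmul,
    tmul_add, tmul_sub, add_tmul, sub_tmul, sub_tmul, tmul_neg, neg_tmul]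
  rw [show ⁅b, a⁆ = -⁅a, b⁆ from (lie_skew b a).symm ▸ rfl]
  simp only [lie_self, lie_neg, neg_lie, lie_zero, zero_lie, tmul_zero, zero_tmul,
    tmul_neg, neg_tmul, neg_neg]
  rw [show ⁅x, ⁅a, b⁆⁆ = ⁅⁅x, a⁆, b⁆ - ⁅⁅x, b⁆, a⁆ from by
    rw [leibniz_lie x a b, show ⁅a, ⁅x, b⁆⁆ = -⁅⁅x, b⁆, a⁆ from (lie_skew a ⁅x, b⁆).symm ▸ rfl]
    abel]
  simp only [tmul_sub, sub_tmul, tmul_neg, neg_tmul, neg_neg]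
  abel

lemma keySym (x : L) : PhiB F L x + (PhiB F L x).flip = PsiB F L x + (PsiB F L x).flip := by
  ext a b c d
  simp only [TensorProduct.AlgebraTensorModule.curry_apply, TensorProduct.curry_apply,
    LinearMap.coe_restrictScalars, LinearMap.add_apply, LinearMap.flip_apply,
    LinearMap.compr₂_apply, TensorProduct.mk_apply, PhiB, PsiB, LinearMap.mk₂_apply, oneMinusTauL_apply, tauL_tmul, cyclicSumL,
    DeltaR_sub, DeltaR_apply, map_sub, map_add, LinearMap.sub_apply, LinearMap.lTensor_sub,
    LinearMap.lTensor_tmul, adVbL_tmul, adT3L_tmul, cmapL_tmul, xiL_tmul,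
    tmul_add, tmul_sub, add_tmul, sub_tmul, tmul_neg, neg_tmul]
  simp only [show ⁅b, a⁆ = -⁅a, b⁆ from (lie_skew b a).symm ▸ rfl,
    show ⁅c, a⁆ = -⁅a, c⁆ from (lie_skew c a).symm ▸ rfl,
    show ⁅c, b⁆ = -⁅b, c⁆ from (lie_skew c b).symm ▸ rfl,
    show ⁅d, a⁆ = -⁅a, d⁆ from (lie_skew d a).symm ▸ rfl,
    show ⁅d, b⁆ = -⁅b, d⁆ from (lie_skew d b).symm ▸ rfl,
    show ⁅d, c⁆ = -⁅c, d⁆ from (lie_skew d c).symm ▸ rfl]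
  simp only [lie_self, lie_neg, neg_lie, lie_zero, zero_lie, tmul_zero, zero_tmul,
    tmul_neg, neg_tmul, neg_neg]
  simp only [
    show ⁅x, ⁅a, c⁆⁆ = ⁅⁅x, a⁆, c⁆ - ⁅⁅x, c⁆, a⁆ from by
      rw [leibniz_lie x a c, show ⁅a, ⁅x, c⁆⁆ = -⁅⁅x, c⁆, a⁆ from (lie_skew a ⁅x, c⁆).symm ▸ rfl]; abel,
    show ⁅x, ⁅a, d⁆⁆ = ⁅⁅x, a⁆, d⁆ - ⁅⁅x, d⁆, a⁆ from by
      rw [leibniz_lie x a d, show ⁅a, ⁅x, d⁆⁆ = -⁅⁅x, d⁆, a⁆ from (lie_skew a ⁅x, d⁆).symm ▸ rfl]; abel,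
    show ⁅x, ⁅b, c⁆⁆ = ⁅⁅x, b⁆, c⁆ - ⁅⁅x, c⁆, b⁆ from by
      rw [leibniz_lie x b c, show ⁅b, ⁅x, c⁆⁆ = -⁅⁅x, c⁆, b⁆ from (lie_skew b ⁅x, c⁆).symm ▸ rfl]; abel,
    show ⁅x, ⁅b, d⁆⁆ = ⁅⁅x, b⁆, d⁆ - ⁅⁅x, d⁆, b⁆ from by
      rw [leibniz_lie x b d, show ⁅b, ⁅x, d⁆⁆ = -⁅⁅x, d⁆, b⁆ from (lie_skew b ⁅x, d⁆).symm ▸ rfl]; abel,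
    show ⁅x, ⁅a, b⁆⁆ = ⁅⁅x, a⁆, b⁆ - ⁅⁅x, b⁆, a⁆ from by
      rw [leibniz_lie x a b, show ⁅a, ⁅x, b⁆⁆ = -⁅⁅x, b⁆, a⁆ from (lie_skew a ⁅x, b⁆).symm ▸ rfl]; abel,
    show ⁅x, ⁅c, d⁆⁆ = ⁅⁅x, c⁆, d⁆ - ⁅⁅x, d⁆, c⁆ from by
      rw [leibniz_lie x c d, show ⁅c, ⁅x, d⁆⁆ = -⁅⁅x, d⁆, c⁆ from (lie_skew c ⁅x, d⁆).symm ▸ rfl]; abel]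
  simp only [tmul_sub, sub_tmul, tmul_neg, neg_tmul, neg_neg]
  abel

lemma keyQuad (x : L) (s : VL F L) : PhiB F L x s s = PsiB F L x s s := by
  induction s using TensorProduct.induction_on with
  | zero => simp
  | tmul a b => exact keyDiag F L x a b
  | add u v hu hv =>
    have h1 : PhiB F L x u v + PhiB F L x v u = PsiB F L x u v + PsiB F L x v u := by
      have := LinearMap.congr_fun (LinearMap.congr_fun (keySym F L x) u) v
      simpa using this
    simp only [map_add, LinearMap.add_apply]
    calc PhiB F L x u u + PhiB F L x v u + (PhiB F L x u v + PhiB F L x v v)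
        = (PhiB F L x u v + PhiB F L x v u) + PhiB F L x u u + PhiB F L x v v := by abel
      _ = (PsiB F L x u v + PsiB F L x v u) + PsiB F L x u u + PsiB F L x v v := by
          rw [h1, hu, hv]
      _ = PsiB F L x u u + PsiB F L x v u + (PsiB F L x u v + PsiB F L x v v) := by abel

end Aux
/-- For a Lie algebra `L` and `r ∈ Im(1-τ)`,
`(1 + ξ + ξ²) ∘ (1 ⊗ Δ_r) ∘ Δ_r (x) = x · c(r)` for all `x ∈ L`. -/
theorem coJacobi_defect_eq_cyb :
    ∀ r ∈ skewImL F L, ∀ x : L,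
      cyclicSumL F L (LinearMap.lTensor L (DeltaR F L r) (DeltaR F L r x))
        = adT3L F L x (cybL F L r) := by
  rintro r ⟨s, rfl⟩ x
  exact keyQuad F L x s
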